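/- Let n ≥ 1 and let U ⊆ ℝⁿ be open. Let A : U → ℝ^{n×n} be continuously differentiable with A(x) symmetric and positive definite for every x ∈ U, let b, c : U → ℝ with c(x) > 0 on U, and let u : U → ℝ be twice continuously differentiable with u(x) > 0 on U and satisfying the Euler–Lagrange equation −div(x ↦ A(x)∇u(x)) + b(x)·u(x) = c(x) on U. Define F : U → ℝⁿ by F(x) = −A(x)∇u(x)/u(x). Then for every x ∈ U, every y ∈ ℝ and every z ∈ ℝⁿ: ⟨z, A(x)z⟩ + b(x)·y² − 2c(x)·y + (div F)(x)·y² + 2y·⟨F(x), z⟩ ≥ −c(x)·u(x). -/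

import Mathlib

open Set

/-- The gradient of a scalar function on `ℝⁿ`, as the vector of partial derivatives. -/
noncomputable def pgrad {n : ℕ} (u : (Fin n → ℝ) → ℝ) (x : Fin n → ℝ) : Fin n → ℝ :=
  fun i => fderiv ℝ u x (Pi.single i 1)

/-- The divergence of a vector field on `ℝⁿ`: `div G (x) = Σᵢ ∂Gᵢ/∂xᵢ (x)`. -/
noncomputable def pdiv {n : ℕ} (G : (Fin n → ℝ) → (Fin n → ℝ)) (x : Fin n → ℝ) : ℝ :=
  ∑ i, fderiv ℝ G x (Pi.single i 1) i

theorem stmt_9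
    (n : ℕ) (hn : 1 ≤ n)
    (U : Set (Fin n → ℝ)) (hU : IsOpen U)
    (A : (Fin n → ℝ) → Matrix (Fin n) (Fin n) ℝ)
    (hA : ∀ i j, ContDiffOn ℝ 1 (fun x => A x i j) U)
    (hAsymm : ∀ x ∈ U, (A x).IsSymm)
    (hApos : ∀ x ∈ U, (A x).PosDef)
    (b c : (Fin n → ℝ) → ℝ) (hc : ∀ x ∈ U, 0 < c x)
    (u : (Fin n → ℝ) → ℝ) (hu : ContDiffOn ℝ 2 u U) (hupos : ∀ x ∈ U, 0 < u x)
    (hEL : ∀ x ∈ U,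
      -pdiv (fun x' => (A x').mulVec (pgrad u x')) x + b x * u x = c x)
    (F : (Fin n → ℝ) → (Fin n → ℝ))
    (hF : ∀ x ∈ U, F x = fun i => -((A x).mulVec (pgrad u x) i) / u x)
    (x : Fin n → ℝ) (hx : x ∈ U) (y : ℝ) (z : Fin n → ℝ) :
    (∑ i, z i * (A x).mulVec z i) + b x * y^2 - 2 * c x * y + pdiv F x * y^2
      + 2 * y * (∑ i, F x i * z i) ≥ -(c x * u x) := by
  set G : (Fin n → ℝ) → (Fin n → ℝ) := fun x' => (A x').mulVec (pgrad u x') with hGdef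
  have hune : u x ≠ 0 := ne_of_gt (hupos x hx)
  have hcx : 0 < c x := hc x hx
  have hux : 0 < u x := hupos x hx
  -- differentiability facts
  have hu2 : ContDiffAt ℝ 2 u x := hu.contDiffAt (hU.mem_nhds hx)
  have hudiff : DifferentiableAt ℝ u x := hu2.differentiableAt (by norm_num)
  have hgradc : ∀ j, DifferentiableAt ℝ (fun x' => fderiv ℝ u x' (Pi.single j 1)) x := by
    intro j
    have h1 : ContDiffAt ℝ 1 (fderiv ℝ u) x := hu2.fderiv_right (by norm_num)
    exact (h1.differentiableAt one_ne_zero).clm_apply (differentiableAt_const _)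
  have hAdiff : ∀ i j, DifferentiableAt ℝ (fun x' => A x' i j) x := fun i j =>
    ((hA i j).contDiffAt (hU.mem_nhds hx)).differentiableAt one_ne_zero
  have hGeq : ∀ i, (fun x' => G x' i)
      = fun x' => ∑ j, A x' i j * fderiv ℝ u x' (Pi.single j 1) := by
    intro i; funext x'; simp [hGdef, Matrix.mulVec, dotProduct, pgrad]
  have hGdiff : ∀ i, DifferentiableAt ℝ (fun x' => G x' i) x := by
    intro i; rw [hGeq i]
    exact DifferentiableAt.fun_sum fun j _ => (hAdiff i j).mul (hgradc j)
  -- derivative of each component of F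
  have hFdiv : ∀ i, ∀ x' ∈ U, F x' i = (-(G x' i)) * (u x')⁻¹ := by
    intro i x' hx'
    rw [hF x' hx']
    simp [hGdef, div_eq_mul_inv]
  have hinv : HasFDerivAt (fun x' => (u x')⁻¹)
      ((ContinuousLinearMap.smulRight (1 : ℝ →L[ℝ] ℝ) (-(u x ^ 2)⁻¹)).comp (fderiv ℝ u x)) x :=
    (hasFDerivAt_inv hune).comp x hudiff.hasFDerivAt
  have hcomp : ∀ i, HasFDerivAt (fun x' => (-(G x' i)) * (u x')⁻¹)
      ((-(G x i)) • ((ContinuousLinearMap.smulRight (1 : ℝ →L[ℝ] ℝ)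
          (-(u x ^ 2)⁻¹)).comp (fderiv ℝ u x))
        + (u x)⁻¹ • (-(fderiv ℝ (fun x' => G x' i) x))) x := by
    intro i
    have h1 : HasFDerivAt (fun x' => -(G x' i)) (-(fderiv ℝ (fun x' => G x' i) x)) x :=
      ((hGdiff i).hasFDerivAt).neg
    exact h1.mul (hinv)
  -- F components eventually equal
  have hFcomp_diff : ∀ i, DifferentiableAt ℝ (fun x' => F x' i) x := by
    intro i
    have he : (fun x' => F x' i) =ᶠ[nhds x] (fun x' => (-(G x' i)) * (u x')⁻¹) :=
      Filter.eventuallyEq_of_mem (hU.mem_nhds hx) (fun x' hx' => hFdiv i x' hx')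
    exact (hcomp i).differentiableAt.congr_of_eventuallyEq he
  have hFder : ∀ i, fderiv ℝ (fun x' => F x' i) x (Pi.single i 1)
      = -(G x i) * (-(u x ^ 2)⁻¹ * fderiv ℝ u x (Pi.single i 1))
        + (u x)⁻¹ * (-(fderiv ℝ (fun x' => G x' i) x (Pi.single i 1))) := by
    intro i
    have he : (fun x' => F x' i) =ᶠ[nhds x] (fun x' => (-(G x' i)) * (u x')⁻¹) :=
      Filter.eventuallyEq_of_mem (hU.mem_nhds hx) (fun x' hx' => hFdiv i x' hx')
    rw [he.fderiv_eq, (hcomp i).fderiv]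
    simp only [ContinuousLinearMap.add_apply, ContinuousLinearMap.smul_apply,
      ContinuousLinearMap.coe_comp', Function.comp_apply,
      ContinuousLinearMap.smulRight_apply, ContinuousLinearMap.one_apply,
      ContinuousLinearMap.neg_apply, smul_eq_mul]
    ring
  -- pdiv F formula
  have hFpi : fderiv ℝ F x = ContinuousLinearMap.pi (fun i => fderiv ℝ (fun x' => F x' i) x) := by
    have : F = fun x' i => F x' i := rfl
    rw [this, fderiv_pi hFcomp_diff]
  have hGpi : fderiv ℝ G x = ContinuousLinearMap.pi (fun i => fderiv ℝ (fun x' => G x' i) x) := by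
    have : G = fun x' i => G x' i := rfl
    rw [this, fderiv_pi hGdiff]
  have hpdivF : pdiv F x = ∑ i, (-(G x i) * (-(u x ^ 2)⁻¹ * pgrad u x i)
        + (u x)⁻¹ * (-(fderiv ℝ (fun x' => G x' i) x (Pi.single i 1)))) := by
    unfold pdiv
    rw [hFpi]
    refine Finset.sum_congr rfl fun i _ => ?_
    rw [ContinuousLinearMap.pi_apply, hFder i]
    rfl
  have hpdivG : pdiv G x = ∑ i, fderiv ℝ (fun x' => G x' i) x (Pi.single i 1) := by
    unfold pdiv
    rw [hGpi]
    exact Finset.sum_congr rfl fun i _ => by rw [ContinuousLinearMap.pi_apply]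
  -- Euler-Lagrange
  have hELx : pdiv G x = b x * u x - c x := by
    have := hEL x hx
    linarith
  have hpdivF2 : pdiv F x = (∑ i, G x i * pgrad u x i) / u x ^ 2 - (b x * u x - c x) / u x := by
    rw [hpdivF, ← hELx, hpdivG]
    have e1 : ∀ i ∈ Finset.univ, (-(G x i) * (-(u x ^ 2)⁻¹ * pgrad u x i)
        + (u x)⁻¹ * (-(fderiv ℝ (fun x' => G x' i) x (Pi.single i 1))))
        = G x i * pgrad u x i * (u x ^ 2)⁻¹
          - fderiv ℝ (fun x' => G x' i) x (Pi.single i 1) * (u x)⁻¹ :=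
      fun i _ => by ring
    rw [Finset.sum_congr rfl e1, Finset.sum_sub_distrib, ← Finset.sum_mul, ← Finset.sum_mul,
      div_eq_mul_inv, div_eq_mul_inv]
  -- positivity of quadratic form
  set g : Fin n → ℝ := pgrad u x with hgdef
  set w : Fin n → ℝ := (A x).mulVec g with hwdef
  set v : Fin n → ℝ := fun i => z i - (y / u x) * g i with hvdef
  have hQ : 0 ≤ ∑ i, v i * (A x).mulVec v i := by
    have := (hApos x hx).posSemidef.dotProduct_mulVec_nonneg v
    simpa [dotProduct] using this
  -- expand mulVec v
  have hmv : ∀ i, (A x).mulVec v i = (A x).mulVec z i - (y / u x) * w i := by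
    intro i
    simp only [hvdef, hwdef, Matrix.mulVec, dotProduct]
    rw [Finset.mul_sum, ← Finset.sum_sub_distrib]
    exact Finset.sum_congr rfl fun j _ => by ring
  -- symmetry
  have hsym : ∑ i, g i * (A x).mulVec z i = ∑ i, w i * z i := by
    have hS := hAsymm x hx
    simp only [hwdef, Matrix.mulVec, dotProduct, Finset.sum_mul, Finset.mul_sum]
    rw [Finset.sum_comm]
    refine Finset.sum_congr rfl fun i _ => Finset.sum_congr rfl fun j _ => ?_
    have : A x i j = A x j i := by
      conv_lhs => rw [← hS]
      rfl
    rw [this]; ring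
  -- expand Q
  have hQexp : ∑ i, v i * (A x).mulVec v i
      = (∑ i, z i * (A x).mulVec z i) - 2 * (y / u x) * (∑ i, w i * z i)
        + (y / u x) ^ 2 * (∑ i, w i * g i) := by
    have : ∀ i, v i * (A x).mulVec v i
        = z i * (A x).mulVec z i - (y / u x) * (g i * (A x).mulVec z i)
          - (y / u x) * (w i * z i) + (y / u x) ^ 2 * (w i * g i) := by
      intro i
      rw [hmv i]
      simp only [hvdef]
      ring
    rw [Finset.sum_congr rfl fun i _ => this i]
    rw [Finset.sum_add_distrib, Finset.sum_sub_distrib, Finset.sum_sub_distrib,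
      ← Finset.mul_sum, ← Finset.mul_sum, ← Finset.mul_sum, hsym]
    ring
  -- F x values
  have hFx : ∀ i, F x i = -(w i) / u x := by
    intro i; rw [hF x hx]
  have hFsum : ∑ i, F x i * z i = -(∑ i, w i * z i) / u x := by
    have e2 : ∀ i ∈ Finset.univ, F x i * z i = -(w i * z i) * (u x)⁻¹ := by
      intro i _; rw [hFx i]; ring
    rw [Finset.sum_congr rfl e2, ← Finset.sum_mul, Finset.sum_neg_distrib, neg_div,
      div_eq_mul_inv]
    ring
  -- G x = w
  have hGx : ∀ i, G x i = w i := fun i => rfl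
  have hwg : (∑ i, G x i * pgrad u x i) = ∑ i, w i * g i := rfl
  rw [hpdivF2, hwg, hFsum]
  set P := ∑ i, w i * z i
  set R := ∑ i, w i * g i
  set a := ∑ i, z i * (A x).mulVec z i
  rw [hQexp] at hQ
  have key : a + b x * y ^ 2 - 2 * c x * y + (R / u x ^ 2 - (b x * u x - c x) / u x) * y ^ 2
      + 2 * y * (-P / u x)
      = (a - 2 * (y / u x) * P + (y / u x) ^ 2 * R) + (c x / u x) * (y - u x) ^ 2
        - c x * u x := by
    field_simp
    ring
  rw [ge_iff_le, ← sub_nonneg]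
  have h2 : 0 ≤ (c x / u x) * (y - u x) ^ 2 := by positivity
  nlinarith [hQ, h2, key]
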